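/- Let ε ∈ (0, 3/4), λ > 0, L' > 0, and let f : ℝ^{d×r} → ℝ be continuously differentiable such that for every x ∈ St(d,r)^ε with x' = Proj_St(x): ‖∇𝓛(x) − ∇𝓛(x')‖_F ≤ L'‖x − x'‖_F and ‖Λ(x) − Λ(x')‖_F ≤ L'‖x − x'‖_F. Then for every x ∈ St(d,r)^ε: ‖∇𝓛(x)‖_F ≤ C‖Λ(x)‖_F, where C = 3L'/(λ(1−ε)) + 2. -/

import Mathlib

open Matrix BigOperators Finset

noncomputable section

namespace DRFGT

/-- Frobenius inner product `⟨A, B⟩ = Tr (A Bᵀ)`. -/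
def finner {m k : Type*} [Fintype m] [Fintype k] (A B : Matrix m k ℝ) : ℝ :=
  Matrix.trace (A * Bᵀ)

/-- Frobenius norm `‖A‖_F = √⟨A, A⟩`. -/
def fnorm {m k : Type*} [Fintype m] [Fintype k] (A : Matrix m k ℝ) : ℝ :=
  Real.sqrt (finner A A)

/-- Skew part of a square matrix, `skew(A) = (A − Aᵀ)/2`. -/
def mskew {m : Type*} [Fintype m] (A : Matrix m m ℝ) : Matrix m m ℝ :=
  (2 : ℝ)⁻¹ • (A - Aᵀ)

/-- Symmetric part of a square matrix, `sym(A) = (A + Aᵀ)/2`. -/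
def msym {m : Type*} [Fintype m] (A : Matrix m m ℝ) : Matrix m m ℝ :=
  (2 : ℝ)⁻¹ • (A + Aᵀ)

/-- Relative (Riemannian) gradient `grad f(x) = skew(∇f(x) xᵀ) x`, where `Df` denotes the
Euclidean gradient `∇f` of `f`. -/
def rgrad {d r : ℕ} (Df : Matrix (Fin d) (Fin r) ℝ → Matrix (Fin d) (Fin r) ℝ)
    (x : Matrix (Fin d) (Fin r) ℝ) : Matrix (Fin d) (Fin r) ℝ :=
  mskew (Df x * xᵀ) * x

/-- Landing field `Λ(x) = grad f(x) + λ x (xᵀ x − I_r)`. -/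
def landing {d r : ℕ} (Df : Matrix (Fin d) (Fin r) ℝ → Matrix (Fin d) (Fin r) ℝ) (lam : ℝ)
    (x : Matrix (Fin d) (Fin r) ℝ) : Matrix (Fin d) (Fin r) ℝ :=
  rgrad Df x + lam • (x * (xᵀ * x - 1))

/-- The Stiefel manifold `St(d,r) = {x : xᵀ x = I_r}`. -/
def St (d r : ℕ) : Set (Matrix (Fin d) (Fin r) ℝ) := {x | xᵀ * x = 1}

/-- The safety region `St(d,r)^ε = {x : ‖xᵀ x − I_r‖_F ≤ ε}`. -/
def StEps (d r : ℕ) (ε : ℝ) : Set (Matrix (Fin d) (Fin r) ℝ) :=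
  {x | fnorm (xᵀ * x - 1) ≤ ε}

/-- The merit function `𝓛(x) = f(x) − ½⟨sym(xᵀ∇f(x)), xᵀx − I_r⟩ + γ·¼‖xᵀx − I_r‖_F²`. -/
def merit {d r : ℕ} (f : Matrix (Fin d) (Fin r) ℝ → ℝ)
    (Df : Matrix (Fin d) (Fin r) ℝ → Matrix (Fin d) (Fin r) ℝ) (γ : ℝ)
    (x : Matrix (Fin d) (Fin r) ℝ) : ℝ :=
  f x - (2 : ℝ)⁻¹ * finner (msym (xᵀ * Df x)) (xᵀ * x - 1)
    + γ * (4 : ℝ)⁻¹ * fnorm (xᵀ * x - 1) ^ 2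

/-- The gradient of the merit function at on-manifold points:
`∇𝓛(x) = ∇f(x) − x · sym(xᵀ∇f(x))` for `x ∈ St(d,r)`. -/
def meritGradSt {d r : ℕ} (Df : Matrix (Fin d) (Fin r) ℝ → Matrix (Fin d) (Fin r) ℝ)
    (x : Matrix (Fin d) (Fin r) ℝ) : Matrix (Fin d) (Fin r) ℝ :=
  Df x - x * msym (xᵀ * Df x)

/-- `x'` is the polar factor of a full-column-rank `x`, i.e. the projection `Proj_St(x)` of `x`
onto the Stiefel manifold: if `x = U S Vᵀ` is a thin SVD then `x' = U Vᵀ`, equivalently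
`x'ᵀ x' = I_r` and `x = x' P` for a positive definite `P` (namely `P = V S Vᵀ`). -/
def IsPolarFactor {d r : ℕ} (x x' : Matrix (Fin d) (Fin r) ℝ) : Prop :=
  x'ᵀ * x' = 1 ∧ ∃ P : Matrix (Fin r) (Fin r) ℝ, P.PosDef ∧ x = x' * P

/-- Frobenius distance from `x` to a set `S`: `dist(S,x) = inf_{y ∈ S} ‖x − y‖_F`. -/
def fdist {d r : ℕ} (S : Set (Matrix (Fin d) (Fin r) ℝ)) (x : Matrix (Fin d) (Fin r) ℝ) : ℝ :=
  sInf ((fun y => fnorm (x - y)) '' S)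

/-- Network average `z̄ = (1/n) Σᵢ zᵢ`. -/
def avg {n d r : ℕ} (z : Fin n → Matrix (Fin d) (Fin r) ℝ) : Matrix (Fin d) (Fin r) ℝ :=
  (n : ℝ)⁻¹ • ∑ i, z i

/-- Frobenius norm of a stacked family: `‖𝐳‖_F = (Σᵢ ‖zᵢ‖_F²)^{1/2}`. -/
def snorm {n d r : ℕ} (z : Fin n → Matrix (Fin d) (Fin r) ℝ) : ℝ :=
  Real.sqrt (∑ i, fnorm (z i) ^ 2)


/-! ### Auxiliary lemmas -/

section FrobeniusAPI

variable {m k l : Type*} [Fintype m] [Fintype k] [Fintype l] [DecidableEq k] [DecidableEq l]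

lemma finner_eq_sum (A B : Matrix m k ℝ) : finner A B = ∑ i, ∑ j, A i j * B i j := by
  simp [finner, Matrix.trace, Matrix.diag, Matrix.mul_apply, Matrix.transpose_apply]

lemma finner_comm (A B : Matrix m k ℝ) : finner A B = finner B A := by
  simp [finner_eq_sum, mul_comm]

lemma finner_self_nonneg (A : Matrix m k ℝ) : 0 ≤ finner A A := by
  rw [finner_eq_sum]
  exact Finset.sum_nonneg fun i _ => Finset.sum_nonneg fun j _ => mul_self_nonneg _

lemma fnorm_nonneg (A : Matrix m k ℝ) : 0 ≤ fnorm A := Real.sqrt_nonneg _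

lemma sq_fnorm (A : Matrix m k ℝ) : fnorm A ^ 2 = finner A A :=
  Real.sq_sqrt (finner_self_nonneg A)

lemma le_of_sq_le_sq {a b : ℝ} (hb : 0 ≤ b) (h : a ^ 2 ≤ b ^ 2) (ha : 0 ≤ a) : a ≤ b := by
  nlinarith

lemma abs_finner_le (A B : Matrix m k ℝ) : |finner A B| ≤ fnorm A * fnorm B := by
  have h : (finner A B) ^ 2 ≤ finner A A * finner B B := by
    have := Finset.sum_mul_sq_le_sq_mul_sq (Finset.univ : Finset (m × k))
      (fun p => A p.1 p.2) (fun p => B p.1 p.2)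
    rw [finner_eq_sum, finner_eq_sum, finner_eq_sum, ← Fintype.sum_prod_type',
      ← Fintype.sum_prod_type', ← Fintype.sum_prod_type']
    simpa [pow_two] using this
  refine le_of_sq_le_sq (mul_nonneg (fnorm_nonneg A) (fnorm_nonneg B)) ?_ (abs_nonneg _)
  rw [sq_abs, mul_pow, sq_fnorm, sq_fnorm]
  exact h

lemma finner_le (A B : Matrix m k ℝ) : finner A B ≤ fnorm A * fnorm B :=
  le_trans (le_abs_self _) (abs_finner_le A B)

lemma finner_add_left (A B C : Matrix m k ℝ) :
    finner (A + B) C = finner A C + finner B C := by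
  simp [finner_eq_sum, Matrix.add_apply, add_mul, Finset.sum_add_distrib]

lemma finner_add_right (A B C : Matrix m k ℝ) :
    finner A (B + C) = finner A B + finner A C := by
  rw [finner_comm, finner_add_left, finner_comm C, finner_comm B]

lemma finner_smul_left (c : ℝ) (A B : Matrix m k ℝ) :
    finner (c • A) B = c * finner A B := by
  simp [finner_eq_sum, Matrix.smul_apply, smul_eq_mul, Finset.mul_sum, mul_assoc]

lemma finner_smul_right (c : ℝ) (A B : Matrix m k ℝ) :
    finner A (c • B) = c * finner A B := by
  rw [finner_comm, finner_smul_left, finner_comm]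

lemma fnorm_smul (c : ℝ) (A : Matrix m k ℝ) : fnorm (c • A) = |c| * fnorm A := by
  rw [fnorm, finner_smul_left, finner_comm, finner_smul_left, ← mul_assoc,
    Real.sqrt_mul (mul_self_nonneg c), fnorm, ← Real.sqrt_mul_self_eq_abs]

lemma fnorm_neg (A : Matrix m k ℝ) : fnorm (-A) = fnorm A := by
  rw [← neg_one_smul ℝ A, fnorm_smul]; simp

lemma fnorm_sub_comm (A B : Matrix m k ℝ) : fnorm (A - B) = fnorm (B - A) := by
  rw [← fnorm_neg (A - B), neg_sub]

lemma fnorm_add_le (A B : Matrix m k ℝ) : fnorm (A + B) ≤ fnorm A + fnorm B := by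
  refine le_of_sq_le_sq (add_nonneg (fnorm_nonneg A) (fnorm_nonneg B)) ?_ (fnorm_nonneg _)
  rw [sq_fnorm, finner_add_left, finner_add_right, finner_add_right, add_sq]
  have h := finner_le A B
  have h2 := sq_fnorm A; have h3 := sq_fnorm B
  have h4 := finner_comm B A
  nlinarith [fnorm_nonneg A, fnorm_nonneg B]

lemma fnorm_triangle_sub (A B : Matrix m k ℝ) : fnorm A ≤ fnorm (A - B) + fnorm B := by
  have h := fnorm_add_le (A - B) B
  simpa using h

lemma sq_fnorm_add_of_orth {A B : Matrix m k ℝ} (h : finner A B = 0) :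
    fnorm (A + B) ^ 2 = fnorm A ^ 2 + fnorm B ^ 2 := by
  rw [sq_fnorm, finner_add_left, finner_add_right, finner_add_right, sq_fnorm, sq_fnorm,
    h, finner_comm B A, h]
  ring

lemma fnorm_le_add_of_orth {A B : Matrix m k ℝ} (h : finner A B = 0) :
    fnorm B ≤ fnorm (A + B) := by
  refine le_of_sq_le_sq (fnorm_nonneg _) ?_ (fnorm_nonneg _)
  rw [sq_fnorm_add_of_orth h]
  nlinarith [sq_nonneg (fnorm A)]

lemma trace_quad_nonneg (N : Matrix k k ℝ) (hN : N.PosSemidef) (A : Matrix k l ℝ) :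
    0 ≤ Matrix.trace (Aᵀ * N * A) := by
  rw [Matrix.trace]
  refine Finset.sum_nonneg fun j _ => ?_
  have h := hN.dotProduct_mulVec_nonneg (fun i => A i j)
  simp only [Matrix.diag, Matrix.mul_apply, Matrix.mulVec, dotProduct, star_trivial,
    Finset.mul_sum, Finset.sum_mul, Matrix.transpose_apply, mul_assoc, mul_comm,
    mul_left_comm] at h ⊢
  rw [Finset.sum_comm] at h
  convert h using 3 with y _ x _
  ring

lemma sq_fnorm_eq_trace (A : Matrix m k ℝ) : fnorm A ^ 2 = Matrix.trace (Aᵀ * A) := by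
  rw [sq_fnorm, finner, Matrix.trace_mul_comm]

lemma sq_fnorm_mul (x : Matrix m k ℝ) (A : Matrix k l ℝ) :
    fnorm (x * A) ^ 2 = Matrix.trace (Aᵀ * (xᵀ * x) * A) := by
  rw [sq_fnorm, finner, Matrix.transpose_mul, Matrix.trace_mul_comm]
  simp [Matrix.mul_assoc]

lemma fnorm_mul_orth {x' : Matrix m k ℝ} (h : x'ᵀ * x' = 1) (A : Matrix k l ℝ) :
    fnorm (x' * A) = fnorm A := by
  have h1 : fnorm (x' * A) ^ 2 = fnorm A ^ 2 := by
    rw [sq_fnorm_mul, h, Matrix.mul_one, sq_fnorm_eq_trace]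
  refine le_antisymm ?_ ?_ <;>
    [exact le_of_sq_le_sq (fnorm_nonneg _) (le_of_eq h1) (fnorm_nonneg _);
     exact le_of_sq_le_sq (fnorm_nonneg _) (le_of_eq h1.symm) (fnorm_nonneg _)]

lemma fnorm_mul_ge {c : ℝ} (hc : 0 ≤ c) (x : Matrix m k ℝ)
    (h : (xᵀ * x - c • (1 : Matrix k k ℝ)).PosSemidef) (A : Matrix k l ℝ) :
    Real.sqrt c * fnorm A ≤ fnorm (x * A) := by
  have h0 := trace_quad_nonneg _ h A
  have hexp : Aᵀ * (xᵀ * x - c • (1 : Matrix k k ℝ)) * A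
      = Aᵀ * (xᵀ * x) * A - c • (Aᵀ * A) := by
    rw [Matrix.mul_sub, Matrix.sub_mul, Matrix.mul_smul, Matrix.mul_one, Matrix.smul_mul]
  rw [hexp, Matrix.trace_sub, Matrix.trace_smul, sub_nonneg, smul_eq_mul] at h0
  refine le_of_sq_le_sq (fnorm_nonneg _) ?_
    (mul_nonneg (Real.sqrt_nonneg _) (fnorm_nonneg _))
  rw [mul_pow, Real.sq_sqrt hc, sq_fnorm_mul, sq_fnorm_eq_trace]
  exact le_trans (by rfl) h0

end FrobeniusAPI

section PSDFacts

variable {k : Type*} [Fintype k] [DecidableEq k]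

lemma abs_quad_le (N : Matrix k k ℝ) (v : k → ℝ) :
    |v ⬝ᵥ (N *ᵥ v)| ≤ fnorm N * (∑ i, v i ^ 2) := by
  set W : Matrix k k ℝ := Matrix.of (fun i j => v i * v j) with hW
  have h1 : v ⬝ᵥ (N *ᵥ v) = finner N W := by
    rw [finner_eq_sum]
    simp only [dotProduct, Matrix.mulVec, dotProduct, hW, Matrix.of_apply,
      Finset.mul_sum]
    exact Finset.sum_congr rfl fun i _ => Finset.sum_congr rfl fun j _ => by ring
  have h2 : fnorm W = ∑ i, v i ^ 2 := by
    have h3 : finner W W = (∑ i, v i ^ 2) * (∑ i, v i ^ 2) := by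
      rw [finner_eq_sum, Finset.sum_mul_sum]
      exact Finset.sum_congr rfl fun i _ => Finset.sum_congr rfl fun j _ => by
        simp [hW]; ring
    rw [fnorm, h3, Real.sqrt_mul_self (Finset.sum_nonneg fun i _ => sq_nonneg _)]
  rw [h1, ← h2]
  exact abs_finner_le N W

lemma shifted_posSemidef {ε : ℝ} (M : Matrix k k ℝ) (hMt : Mᵀ = M)
    (hM : fnorm (M - 1) ≤ ε) : (M - (1 - ε) • (1 : Matrix k k ℝ)).PosSemidef := by
  rw [Matrix.posSemidef_iff_dotProduct_mulVec]; constructor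
  · rw [Matrix.IsHermitian, Matrix.conjTranspose_eq_transpose_of_trivial,
      Matrix.transpose_sub, Matrix.transpose_smul, Matrix.transpose_one, hMt]
  · intro v
    have hq0 := abs_quad_le (M - 1) v
    have hs : 0 ≤ ∑ i, v i ^ 2 := Finset.sum_nonneg fun i _ => sq_nonneg _
    have hq : -(ε * ∑ i, v i ^ 2) ≤ v ⬝ᵥ ((M - 1) *ᵥ v) := by
      have := neg_abs_le (v ⬝ᵥ ((M - 1) *ᵥ v))
      nlinarith
    have hsplit : star v ⬝ᵥ ((M - (1 - ε) • (1 : Matrix k k ℝ)) *ᵥ v)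
        = v ⬝ᵥ ((M - 1) *ᵥ v) + ε * ∑ i, v i ^ 2 := by
      simp only [star_trivial, Matrix.sub_mulVec, Matrix.smul_mulVec,
        Matrix.one_mulVec, dotProduct_sub, dotProduct_smul, smul_eq_mul]
      have hvv : v ⬝ᵥ v = ∑ i, v i ^ 2 := by simp [dotProduct, pow_two]
      rw [hvv]; ring
    rw [hsplit]; linarith

lemma gram_posDef {ε : ℝ} (hε : ε < 1) {d : Type*} [Fintype d] (x : Matrix d k ℝ)
    (hM : fnorm (xᵀ * x - 1) ≤ ε) : (xᵀ * x).PosDef := by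
  have hMt : (xᵀ * x)ᵀ = xᵀ * x := by
    rw [Matrix.transpose_mul, Matrix.transpose_transpose]
  have hpsd := shifted_posSemidef (xᵀ * x) hMt hM
  rw [Matrix.posDef_iff_dotProduct_mulVec]; constructor
  · rw [Matrix.IsHermitian, Matrix.conjTranspose_eq_transpose_of_trivial, hMt]
  · intro v hv
    have h1 := hpsd.dotProduct_mulVec_nonneg v
    have hs : 0 < ∑ i, v i ^ 2 := by
      obtain ⟨i, hi⟩ := Function.ne_iff.mp hv
      exact Finset.sum_pos' (fun j _ => sq_nonneg _)
        ⟨i, Finset.mem_univ i, lt_of_le_of_ne (sq_nonneg _) (Ne.symm (pow_ne_zero 2 hi))⟩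
    have hsplit : star v ⬝ᵥ ((xᵀ * x) *ᵥ v)
        = star v ⬝ᵥ (((xᵀ * x) - (1 - ε) • (1 : Matrix k k ℝ)) *ᵥ v)
          + (1 - ε) * ∑ i, v i ^ 2 := by
      simp only [star_trivial, Matrix.sub_mulVec, Matrix.smul_mulVec,
        Matrix.one_mulVec, dotProduct_sub, dotProduct_smul, smul_eq_mul]
      have hvv : v ⬝ᵥ v = ∑ i, v i ^ 2 := by simp [dotProduct, pow_two]
      rw [hvv]; ring
    rw [hsplit]
    nlinarith

lemma shift_one_posSemidef (P : Matrix k k ℝ) (hP : P.PosSemidef) :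
    ((P + 1)ᵀ * (P + 1) - (1 : ℝ) • (1 : Matrix k k ℝ)).PosSemidef := by
  have hPt : Pᵀ = P := by
    have h := hP.1
    rwa [Matrix.IsHermitian, Matrix.conjTranspose_eq_transpose_of_trivial] at h
  have hexp : (P + 1)ᵀ * (P + 1) - (1 : ℝ) • (1 : Matrix k k ℝ) = P * P + (P + P) := by
    rw [Matrix.transpose_add, Matrix.transpose_one, hPt]
    rw [Matrix.add_mul, Matrix.mul_add, Matrix.mul_add]
    simp
    abel
  rw [hexp]
  have h1 : (P * P).PosSemidef := by
    have h2 := Matrix.posSemidef_conjTranspose_mul_self P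
    rwa [Matrix.conjTranspose_eq_transpose_of_trivial, hPt] at h2
  exact h1.add (hP.add hP)

end PSDFacts

section Geometry

variable {m r l : Type*} [Fintype m] [Fintype r] [Fintype l] [DecidableEq r] [DecidableEq l]

lemma mskew_transpose (A : Matrix m m ℝ) : (mskew A)ᵀ = -(mskew A) := by
  rw [mskew, Matrix.transpose_smul, Matrix.transpose_sub, Matrix.transpose_transpose,
    ← neg_sub A Aᵀ, smul_neg]

lemma finner_skew_sym_zero (S : Matrix m m ℝ) (x : Matrix m r ℝ) (N : Matrix r r ℝ)
    (hN : Nᵀ = N) : finner (mskew S * x) (x * N) = 0 := by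
  set K := x * N * xᵀ with hKdef
  have hK : Kᵀ = K := by
    rw [hKdef, Matrix.transpose_mul, Matrix.transpose_mul, Matrix.transpose_transpose, hN,
      Matrix.mul_assoc]
  have h1 : finner (mskew S * x) (x * N) = Matrix.trace (mskew S * K) := by
    rw [finner, Matrix.transpose_mul, hN, hKdef]
    simp [Matrix.mul_assoc]
  have h2 : Matrix.trace (mskew S * K) = -Matrix.trace (mskew S * K) := by
    conv_lhs => rw [← Matrix.trace_transpose, Matrix.transpose_mul, hK, mskew_transpose,
      Matrix.mul_neg, Matrix.trace_neg, Matrix.trace_mul_comm]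
  rw [h1]; linarith

lemma finner_left_orth_zero (x' : Matrix m r ℝ) (K : Matrix r l ℝ) (B : Matrix m l ℝ)
    (h : x'ᵀ * B = 0) : finner (x' * K) B = 0 := by
  have hBt : Bᵀ * x' = 0 := by
    have h2 := congrArg Matrix.transpose h
    simpa [Matrix.transpose_mul] using h2
  rw [finner, Matrix.trace_mul_comm, ← Matrix.mul_assoc, hBt, Matrix.zero_mul,
    Matrix.trace_zero]

end Geometry

lemma mskew_eq_sub_msym {m : Type*} [Fintype m] (A : Matrix m m ℝ) :
    mskew A = A - msym A := by
  ext i j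
  simp [mskew, msym, Matrix.sub_apply, Matrix.add_apply, Matrix.smul_apply,
    Matrix.transpose_apply]
  ring

lemma meritGradSt_le_two_rgrad {d r : ℕ}
    (Df : Matrix (Fin d) (Fin r) ℝ → Matrix (Fin d) (Fin r) ℝ)
    (x' : Matrix (Fin d) (Fin r) ℝ) (h : x'ᵀ * x' = 1) :
    fnorm (meritGradSt Df x') ≤ 2 * fnorm (rgrad Df x') := by
  set G := Df x' with hG
  set A := x'ᵀ * G with hA
  set B := G - x' * A with hB
  have hBorth : x'ᵀ * B = 0 := by
    rw [hB, Matrix.mul_sub, ← Matrix.mul_assoc, h, Matrix.one_mul, sub_self]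
  have hDL : meritGradSt Df x' = x' * mskew A + B := by
    rw [meritGradSt, ← hG, ← hA, mskew_eq_sub_msym, Matrix.mul_sub, hB]
    abel
  have hAt : Gᵀ * x' = Aᵀ := by
    rw [hA, Matrix.transpose_mul, Matrix.transpose_transpose]
  have hrg : rgrad Df x' = x' * mskew A + (2:ℝ)⁻¹ • B := by
    have e1 : rgrad Df x' = (2:ℝ)⁻¹ • (G - x' * Aᵀ) := by
      rw [rgrad, ← hG, mskew, Matrix.smul_mul, Matrix.sub_mul, Matrix.transpose_mul,
        Matrix.transpose_transpose, Matrix.mul_assoc, h, Matrix.mul_one,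
        Matrix.mul_assoc, hAt]
    have e2 : x' * mskew A + (2:ℝ)⁻¹ • B = (2:ℝ)⁻¹ • (G - x' * Aᵀ) := by
      rw [hB, mskew, Matrix.mul_smul, Matrix.mul_sub, ← smul_add]
      congr 1
      abel
    rw [e1, e2]
  have horth1 : finner (x' * mskew A) B = 0 := finner_left_orth_zero x' _ B hBorth
  have horth2 : finner (x' * mskew A) ((2:ℝ)⁻¹ • B) = 0 := by
    rw [finner_smul_right, horth1, mul_zero]
  have h1 : fnorm (meritGradSt Df x') ^ 2 = fnorm (x' * mskew A) ^ 2 + fnorm B ^ 2 := by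
    rw [hDL]; exact sq_fnorm_add_of_orth horth1
  have h2 : fnorm (rgrad Df x') ^ 2
      = fnorm (x' * mskew A) ^ 2 + ((2:ℝ)⁻¹ * fnorm B) ^ 2 := by
    rw [hrg, sq_fnorm_add_of_orth horth2, fnorm_smul,
      abs_of_pos (by norm_num : (0:ℝ) < 2⁻¹)]
  refine le_of_sq_le_sq (mul_nonneg (by norm_num) (fnorm_nonneg _)) ?_ (fnorm_nonneg _)
  rw [h1, mul_pow]
  nlinarith [fnorm_nonneg (x' * mskew A), fnorm_nonneg B, sq_nonneg (fnorm (x' * mskew A))]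

lemma polar_package {d r : ℕ} {ε : ℝ} (hε1 : ε < 1) (x : Matrix (Fin d) (Fin r) ℝ)
    (hx : fnorm (xᵀ * x - 1) ≤ ε) :
    ∃ x', IsPolarFactor x x' ∧ fnorm (x - x') ≤ fnorm (xᵀ * x - 1) := by
  have hMpd := gram_posDef hε1 x hx
  have hMpsd := hMpd.posSemidef
  obtain ⟨P, hPpsd, hPP⟩ : ∃ P : Matrix (Fin r) (Fin r) ℝ, P.PosSemidef ∧ P * P = xᵀ * x := by
    open scoped MatrixOrder in
    exact ⟨CFC.sqrt (xᵀ * x), Matrix.nonneg_iff_posSemidef.mp (CFC.sqrt_nonneg _),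
      CFC.sqrt_mul_sqrt_self _ (Matrix.nonneg_iff_posSemidef.mpr hMpsd)⟩
  have hPt : Pᵀ = P := by
    have h := hPpsd.1
    rwa [Matrix.IsHermitian, Matrix.conjTranspose_eq_transpose_of_trivial] at h
  have hPd : P.PosDef := by
    refine Matrix.posDef_iff_dotProduct_mulVec.mpr
      ⟨hPpsd.1, fun v hv => lt_of_le_of_ne (hPpsd.dotProduct_mulVec_nonneg v) fun hcon => ?_⟩
    have h0 : P *ᵥ v = 0 := (hPpsd.dotProduct_mulVec_zero_iff v).mp hcon.symm
    have hMv : (xᵀ * x) *ᵥ v = 0 := by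
      rw [← hPP, ← Matrix.mulVec_mulVec, h0, Matrix.mulVec_zero]
    have hcontr := hMpd.dotProduct_mulVec_pos hv
    rw [hMv, dotProduct_zero] at hcontr
    exact lt_irrefl 0 hcontr
  have hdet : IsUnit P.det := hPd.det_pos.ne'.isUnit
  set x' := x * P⁻¹ with hx'
  have hinv1 : P⁻¹ * P = 1 := Matrix.nonsing_inv_mul P hdet
  have hinv2 : P * P⁻¹ = 1 := Matrix.mul_nonsing_inv P hdet
  have hxf : x' * P = x := by rw [hx', Matrix.mul_assoc, hinv1, Matrix.mul_one]
  have hPit : P⁻¹ᵀ = P⁻¹ := by rw [Matrix.transpose_nonsing_inv, hPt]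
  have horth : x'ᵀ * x' = 1 := by
    rw [hx', Matrix.transpose_mul, hPit, ← Matrix.mul_assoc,
      Matrix.mul_assoc P⁻¹ xᵀ x, ← hPP, ← Matrix.mul_assoc, hinv1, Matrix.one_mul, hinv2]
  refine ⟨x', ⟨horth, P, hPd, hxf.symm⟩, ?_⟩
  have hdiff : x - x' = x' * (P - 1) := by rw [Matrix.mul_sub, Matrix.mul_one, hxf]
  rw [hdiff, fnorm_mul_orth horth]
  have hfac : xᵀ * x - 1 = (P + 1) * (P - 1) := by
    rw [← hPP]; noncomm_ring
  rw [hfac]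
  have hge := fnorm_mul_ge (by norm_num : (0:ℝ) ≤ 1) (P + 1)
    (shift_one_posSemidef P hPpsd) (P - 1)
  simpa [Real.sqrt_one] using hge
set_option maxHeartbeats 1000000 in
/-- Let `ε ∈ (0, 3/4)`, `λ > 0`, `L' > 0`, and let `f` be continuously
differentiable with Euclidean gradient `Df` and merit-function gradient `DL = ∇𝓛` (so that
`DL x' = ∇f(x') − x'·sym(x'ᵀ∇f(x'))` at on-manifold points). Assume that for every
`x ∈ St(d,r)^ε` with `x' = Proj_St(x)` one has `‖∇𝓛(x) − ∇𝓛(x')‖_F ≤ L'‖x − x'‖_F` and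
`‖Λ(x) − Λ(x')‖_F ≤ L'‖x − x'‖_F`. Then for every `x ∈ St(d,r)^ε`,
`‖∇𝓛(x)‖_F ≤ C‖Λ(x)‖_F` with `C = 3L'/(λ(1−ε)) + 2`. -/
theorem meritGrad_le_C_landing {d r : ℕ} (ε lam L' γ : ℝ)
    (hε : ε ∈ Set.Ioo (0 : ℝ) (3 / 4)) (hlam : 0 < lam) (hL' : 0 < L')
    (f : Matrix (Fin d) (Fin r) ℝ → ℝ)
    (Df : Matrix (Fin d) (Fin r) ℝ → Matrix (Fin d) (Fin r) ℝ)
    (DL : Matrix (Fin d) (Fin r) ℝ → Matrix (Fin d) (Fin r) ℝ)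
    (hDLSt : ∀ x' ∈ St d r, DL x' = meritGradSt Df x')
    (hDLlip : ∀ x x' : Matrix (Fin d) (Fin r) ℝ, x ∈ StEps d r ε → IsPolarFactor x x' →
      fnorm (DL x - DL x') ≤ L' * fnorm (x - x'))
    (hLamLip : ∀ x x' : Matrix (Fin d) (Fin r) ℝ, x ∈ StEps d r ε → IsPolarFactor x x' →
      fnorm (landing Df lam x - landing Df lam x') ≤ L' * fnorm (x - x')) :
    ∀ x ∈ StEps d r ε,
      fnorm (DL x) ≤ (3 * L' / (lam * (1 - ε)) + 2) * fnorm (landing Df lam x) := by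
  obtain ⟨hε0, hε34⟩ := hε
  intro x hxmem
  have hx : fnorm (xᵀ * x - 1) ≤ ε := hxmem
  obtain ⟨x', hpf, hdist⟩ := polar_package (by linarith : ε < 1) x hx
  have horth : x'ᵀ * x' = 1 := hpf.1
  have hSt : x' ∈ St d r := horth
  have hlip1 := hDLlip x x' hxmem hpf
  have hlip2 := hLamLip x x' hxmem hpf
  have htri1 : fnorm (DL x) ≤ fnorm (DL x - DL x') + fnorm (DL x') :=
    fnorm_triangle_sub _ _
  have hLam' : landing Df lam x' = rgrad Df x' := by
    rw [landing, horth, sub_self, Matrix.mul_zero, smul_zero, add_zero]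
  have hman : fnorm (DL x') ≤ 2 * fnorm (landing Df lam x') := by
    rw [hDLSt x' hSt, hLam']
    exact meritGradSt_le_two_rgrad Df x' horth
  have htri2 : fnorm (landing Df lam x') ≤ fnorm (x - x') * L' + fnorm (landing Df lam x) := by
    have h5 := fnorm_triangle_sub (landing Df lam x') (landing Df lam x)
    rw [fnorm_sub_comm] at h5
    linarith
  have hMt : (xᵀ * x)ᵀ = xᵀ * x := by
    rw [Matrix.transpose_mul, Matrix.transpose_transpose]
  have hNt : (xᵀ * x - 1)ᵀ = xᵀ * x - 1 := by
    rw [Matrix.transpose_sub, Matrix.transpose_one, hMt]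
  have horthL : finner (rgrad Df x) (lam • (x * (xᵀ * x - 1))) = 0 := by
    rw [finner_smul_right, rgrad, finner_skew_sym_zero _ x _ hNt, mul_zero]
  have hlow1 : fnorm (lam • (x * (xᵀ * x - 1))) ≤ fnorm (landing Df lam x) :=
    fnorm_le_add_of_orth horthL
  have hlow2 : Real.sqrt (1 - ε) * fnorm (xᵀ * x - 1) ≤ fnorm (x * (xᵀ * x - 1)) :=
    fnorm_mul_ge (by linarith) x (shifted_posSemidef (xᵀ * x) hMt hx) _
  have hsmul : fnorm (lam • (x * (xᵀ * x - 1))) = lam * fnorm (x * (xᵀ * x - 1)) := by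
    rw [fnorm_smul, abs_of_pos hlam]
  have hsq : 1 - ε ≤ Real.sqrt (1 - ε) := by
    nlinarith [Real.sq_sqrt (by linarith : (0:ℝ) ≤ 1 - ε), Real.sqrt_nonneg (1 - ε)]
  have hN1 : 0 ≤ fnorm (xᵀ * x - 1) := fnorm_nonneg _
  have hlb : lam * ((1 - ε) * fnorm (xᵀ * x - 1)) ≤ fnorm (landing Df lam x) := by
    have h6 : lam * (Real.sqrt (1 - ε) * fnorm (xᵀ * x - 1)) ≤ fnorm (landing Df lam x) := by
      calc lam * (Real.sqrt (1 - ε) * fnorm (xᵀ * x - 1))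
          ≤ lam * fnorm (x * (xᵀ * x - 1)) :=
            mul_le_mul_of_nonneg_left hlow2 hlam.le
        _ = fnorm (lam • (x * (xᵀ * x - 1))) := hsmul.symm
        _ ≤ fnorm (landing Df lam x) := hlow1
    nlinarith [mul_nonneg (mul_nonneg hlam.le hN1) (sub_nonneg.mpr hsq)]
  have hc : 0 < lam * (1 - ε) := by nlinarith
  have hDelta : 0 ≤ fnorm (x - x') := fnorm_nonneg _
  have hLx : 0 ≤ fnorm (landing Df lam x) := fnorm_nonneg _
  have hkey : 3 * L' * fnorm (x - x')
      ≤ 3 * L' / (lam * (1 - ε)) * fnorm (landing Df lam x) := by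
    rw [div_mul_eq_mul_div, le_div_iff₀ hc]
    have k1 : lam * (1 - ε) * fnorm (x - x') ≤ lam * ((1 - ε) * fnorm (xᵀ * x - 1)) := by
      nlinarith [mul_nonneg hc.le (sub_nonneg.mpr hdist)]
    have k2 : lam * (1 - ε) * fnorm (x - x') ≤ fnorm (landing Df lam x) := le_trans k1 hlb
    nlinarith [mul_le_mul_of_nonneg_left k2 (by positivity : (0:ℝ) ≤ 3 * L')]
  rw [add_mul]
  nlinarith


end DRFGT
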